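/- If X and Y are compact Hausdorff spaces and f : X → Y is a continuous surjective monotone map, then Sln(Y) ≤ Sln(X). -/

import Mathlib

open Set Cardinal TopologicalSpace Topology

universe u

/-- The Suslinian number of a continuum `X`: the supremum of the cardinalities of
pairwise disjoint families of non-degenerate subcontinua of `X`. -/
noncomputable def SlnC (X : Type u) [TopologicalSpace X] : Cardinal.{u} :=
  ⨆ 𝒞 : {𝒞 : Set (Set X) //
      (∀ C ∈ 𝒞, IsCompact C ∧ IsConnected C ∧ C.Nontrivial) ∧ 𝒞.PairwiseDisjoint id},
    #(𝒞.1)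

/-- The Suslinian number of a Tychonoff space `X`: the minimum of the Suslinian numbers
of continua containing a homeomorphic copy of `X`. -/
noncomputable def Sln (X : Type u) [TopologicalSpace X] : Cardinal.{u} :=
  sInf {κ : Cardinal.{u} | ∃ (Y : Type u) (_ : TopologicalSpace Y),
    CompactSpace Y ∧ T2Space Y ∧ ConnectedSpace Y ∧
    (∃ e : X → Y, IsEmbedding e) ∧ SlnC Y = κ}

/-- The weight of a topological space: the minimal cardinality of a base. -/
noncomputable def tweight (X : Type u) [TopologicalSpace X] : Cardinal.{u} :=
  sInf {κ : Cardinal.{u} | ∃ B : Set (Set X), IsTopologicalBasis B ∧ #B = κ}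

/-- The Suslin (cellularity) number: the supremum of the cardinalities of pairwise
disjoint families of non-empty open sets. -/
noncomputable def suslinNumber (X : Type u) [TopologicalSpace X] : Cardinal.{u} :=
  ⨆ 𝒰 : {𝒰 : Set (Set X) // (∀ U ∈ 𝒰, IsOpen U ∧ U.Nonempty) ∧ 𝒰.PairwiseDisjoint id},
    #(𝒰.1)

/-- The density of a space: the minimal cardinality of a dense subset. -/
noncomputable def densityCard (X : Type u) [TopologicalSpace X] : Cardinal.{u} :=
  sInf {κ : Cardinal.{u} | ∃ D : Set X, Dense D ∧ #D = κ}

/-- The Lindelöf number of a space: the least `κ` such that every open cover admits a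
subcover of cardinality at most `κ`. -/
noncomputable def lindelofNum (X : Type u) [TopologicalSpace X] : Cardinal.{u} :=
  sInf {κ : Cardinal.{u} | ∀ 𝒰 : Set (Set X), (∀ U ∈ 𝒰, IsOpen U) → ⋃₀ 𝒰 = Set.univ →
    ∃ 𝒱 ⊆ 𝒰, #𝒱 ≤ κ ∧ ⋃₀ 𝒱 = Set.univ}

/-- The hereditary Lindelöf number: the supremum of the Lindelöf numbers of subspaces. -/
noncomputable def hLindelofNum (X : Type u) [TopologicalSpace X] : Cardinal.{u} :=
  ⨆ Y : Set X, lindelofNum ↥Y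

/-- A space is zero-dimensional if it has a base of clopen sets. -/
def IsZeroDim (X : Type u) [TopologicalSpace X] : Prop :=
  ∃ B : Set (Set X), IsTopologicalBasis B ∧ ∀ U ∈ B, IsClopen U

/-- A continuum is Suslinian if every pairwise disjoint family of non-degenerate
subcontinua is countable. -/
def IsSuslinianSpace (X : Type u) [TopologicalSpace X] : Prop :=
  ∀ 𝒞 : Set (Set X), (∀ C ∈ 𝒞, IsCompact C ∧ IsConnected C ∧ C.Nontrivial) →
    𝒞.PairwiseDisjoint id → 𝒞.Countable

/-- `T` is a `κ`-Suslin tree: a tree (the strict predecessors of each node are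
well-ordered) of height `κ` having no chains and no antichains of cardinality `κ`. -/
def IsSuslinTree (κ : Cardinal.{u}) (T : Type u) [PartialOrder T] : Prop :=
  ∃ h : ∀ t : T, IsWellOrder {s : T // s < t} (· < ·),
    (⨆ t : T, Order.succ (@Ordinal.type {s : T // s < t} (· < ·) (h t))) = κ.ord ∧
    (∀ C : Set T, IsChain (· ≤ ·) C → #C < κ) ∧
    (∀ A : Set T, IsAntichain (· ≤ ·) A → #A < κ)

/-- The rim-weight: the minimum over bases `B` of `sup_{U ∈ B} w(∂U)`. -/
noncomputable def rimWeight (X : Type u) [TopologicalSpace X] : Cardinal.{u} :=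
  sInf {κ : Cardinal.{u} | ∃ B : Set (Set X), IsTopologicalBasis B ∧
    (⨆ U : B, tweight ↥(frontier (U : Set X))) = κ}

/-- The covering dimension of `X` is at most `n`: every finite open cover has a finite
open refinement in which no point belongs to more than `n + 1` members. -/
def CovDimLE (X : Type u) [TopologicalSpace X] (n : ℕ) : Prop :=
  ∀ 𝒰 : Set (Set X), (∀ U ∈ 𝒰, IsOpen U) → ⋃₀ 𝒰 = Set.univ → 𝒰.Finite →
    ∃ 𝒱 : Set (Set X), 𝒱.Finite ∧ (∀ V ∈ 𝒱, IsOpen V) ∧ ⋃₀ 𝒱 = Set.univ ∧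
      (∀ V ∈ 𝒱, ∃ U ∈ 𝒰, V ⊆ U) ∧
      ∀ x : X, {V ∈ 𝒱 | x ∈ V}.ncard ≤ n + 1

/-- The Vietoris topology on the collection of all subsets of `X`, generated by the sets
`{F | F ⊆ U}` and `{F | F ∩ U ≠ ∅}` for `U` open. -/
def vietorisTop (X : Type u) [TopologicalSpace X] : TopologicalSpace (Set X) :=
  TopologicalSpace.generateFrom
    (((fun U => {F : Set X | F ⊆ U}) '' {U : Set X | IsOpen U}) ∪
     ((fun U => {F : Set X | (F ∩ U).Nonempty}) '' {U : Set X | IsOpen U}))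

/-- The hyperspace `exp_c(X)` of subcontinua of `X` with the Vietoris topology. -/
def expc (X : Type u) [TopologicalSpace X] : Type u :=
  {C : Set X // IsCompact C ∧ IsConnected C}

instance expc.topologicalSpace (X : Type u) [TopologicalSpace X] :
    TopologicalSpace (expc X) :=
  TopologicalSpace.induced Subtype.val (vietorisTop X)

/-- A map between continua is atomic if it is monotone and its restriction to the
preimage of any non-degenerate subcontinuum `Z` of `Y` is an irreducible map onto `Z`
(no proper closed subset of `f ⁻¹ Z` maps onto `Z`). -/
def IsAtomicMap {X Y : Type u} [TopologicalSpace X] [TopologicalSpace Y] (f : X → Y) : Prop :=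
  (∀ y : Y, IsConnected (f ⁻¹' {y})) ∧
  ∀ Z : Set Y, IsCompact Z → IsConnected Z → Z.Nontrivial →
    ∀ A : Set X, IsClosed A → A ⊆ f ⁻¹' Z → f '' A = Z → A = f ⁻¹' Z

/-- An atomic map is `I`-atomic if each of its fibers is a singleton or an arc. -/
def IsIAtomicMap {X Y : Type u} [TopologicalSpace X] [TopologicalSpace Y] (f : X → Y) : Prop :=
  IsAtomicMap f ∧
  ∀ y : Y, (∃ x, f ⁻¹' {y} = {x}) ∨ Nonempty (↥(f ⁻¹' {y}) ≃ₜ unitInterval)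

/-- `X` is homeomorphic to the inverse limit of the inverse system `(Z, π)`. -/
def HomeoToInvLimit (X : Type u) [TopologicalSpace X] {ι : Type u} [Preorder ι]
    (Z : ι → Type u) (tZ : ∀ α, TopologicalSpace (Z α))
    (π : ∀ α β : ι, α ≤ β → Z β → Z α) : Prop :=
  haveI := tZ
  Nonempty (X ≃ₜ {z : ∀ α, Z α // ∀ (α β : ι) (h : α ≤ β), π α β h (z β) = z α})

section Aux

variable {X Y : Type u} [TopologicalSpace X] [TopologicalSpace Y]

/-- The preimage of a closed connected set under a continuous monotone map from a compact
Hausdorff space to a Hausdorff space is connected. -/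
lemma preimage_isConnected_of_monotone [CompactSpace X] [T2Space Y]
    {f : X → Y} (hf : Continuous f) (hmono : ∀ y : Y, IsConnected (f ⁻¹' {y}))
    {C : Set Y} (hCcl : IsClosed C) (hCconn : IsConnected C) :
    IsConnected (f ⁻¹' C) := by
  have hPcl : IsClosed (f ⁻¹' C) := hCcl.preimage hf
  haveI : CompactSpace (f ⁻¹' C) := isCompact_iff_compactSpace.mp hPcl.isCompact
  set g : ↥(f ⁻¹' C) → ↥C := fun z => ⟨f z.1, z.2⟩ with hg
  have hgc : Continuous g := Continuous.subtype_mk (hf.comp continuous_subtype_val) _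
  have hgfib : ∀ t : ↥C, IsConnected (g ⁻¹' {t}) := by
    intro t
    have h1 : g ⁻¹' {t} = Subtype.val ⁻¹' (f ⁻¹' {t.1}) := by
      ext z
      simp [hg, Subtype.ext_iff]
    rw [h1]
    refine (hmono t.1).preimage_of_isClosedMap Subtype.val_injective
      hPcl.isClosedEmbedding_subtypeVal.isClosedMap ?_
    rw [Subtype.range_val]
    intro x hx
    simp only [mem_preimage, mem_singleton_iff] at hx
    simpa [mem_preimage, hx] using t.2
  have hgsurj : Function.Surjective g := by
    intro t
    obtain ⟨x, hx⟩ := (hgfib t).nonempty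
    exact ⟨x, hx⟩
  have hq : IsQuotientMap g := hgc.isClosedMap.isQuotientMap hgc hgsurj
  have hcl : ∀ T : Set ↥C, IsClosed T ↔ IsClosed (g ⁻¹' T) := fun T =>
    hq.isClosed_preimage.symm
  haveI : ConnectedSpace ↥C := Subtype.connectedSpace hCconn
  obtain ⟨c0⟩ : Nonempty ↥C := inferInstance
  have hconn := preimage_connectedComponent_connected hgfib hq.isCoinducing c0
  rw [PreconnectedSpace.connectedComponent_eq_univ, preimage_univ] at hconn
  rw [isConnected_iff_connectedSpace]
  exact connectedSpace_iff_univ.mpr hconn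

lemma slnC_bddAbove (X : Type u) [TopologicalSpace X] :
    BddAbove (Set.range fun 𝒞 : {𝒞 : Set (Set X) //
      (∀ C ∈ 𝒞, IsCompact C ∧ IsConnected C ∧ C.Nontrivial) ∧ 𝒞.PairwiseDisjoint id} =>
      #(𝒞.1)) := by
  refine ⟨#(Set X), ?_⟩
  rintro c ⟨𝒞, rfl⟩
  exact Cardinal.mk_set_le _

lemma le_slnC {𝒞 : Set (Set X)}
    (h1 : ∀ C ∈ 𝒞, IsCompact C ∧ IsConnected C ∧ C.Nontrivial)
    (h2 : 𝒞.PairwiseDisjoint id) : #𝒞 ≤ SlnC X :=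
  le_ciSup (slnC_bddAbove X) ⟨𝒞, h1, h2⟩

/-- Monotonicity of `SlnC` along continuous monotone surjections. -/
lemma slnC_le_of_monotone [CompactSpace X] [T2Space X] [T2Space Y]
    {f : X → Y} (hf : Continuous f) (hsurj : Function.Surjective f)
    (hmono : ∀ y : Y, IsConnected (f ⁻¹' {y})) : SlnC Y ≤ SlnC X := by
  refine ciSup_le' ?_
  rintro ⟨𝒞, h1, h2⟩
  have hinj : Set.InjOn (fun C : Set Y => f ⁻¹' C) 𝒞 := by
    intro C1 _ C2 _ h
    have := congrArg (fun S => f '' S) h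
    simpa [Set.image_preimage_eq _ hsurj] using this
  have hD1 : ∀ D ∈ (fun C : Set Y => f ⁻¹' C) '' 𝒞,
      IsCompact D ∧ IsConnected D ∧ D.Nontrivial := by
    rintro D ⟨C, hC, rfl⟩
    obtain ⟨hCcpt, hCconn, hCnt⟩ := h1 C hC
    refine ⟨(hCcpt.isClosed.preimage hf).isCompact,
      preimage_isConnected_of_monotone hf hmono hCcpt.isClosed hCconn, ?_⟩
    obtain ⟨y1, hy1, y2, hy2, hne⟩ := hCnt
    obtain ⟨x1, rfl⟩ := hsurj y1
    obtain ⟨x2, rfl⟩ := hsurj y2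
    exact ⟨x1, hy1, x2, hy2, fun h => hne (by rw [h])⟩
  have hD2 : ((fun C : Set Y => f ⁻¹' C) '' 𝒞).PairwiseDisjoint id := by
    rintro _ ⟨C1, hC1, rfl⟩ _ ⟨C2, hC2, rfl⟩ hne
    have hCne : C1 ≠ C2 := fun h => hne (by rw [h])
    exact (h2 hC1 hC2 hCne).preimage f
  calc #𝒞 = #((fun C : Set Y => f ⁻¹' C) '' 𝒞) :=
        (Cardinal.mk_image_eq_of_injOn _ _ hinj).symm
    _ ≤ SlnC X := le_slnC hD1 hD2

end Aux

/-- If `X`, `Y` are compact Hausdorff and `f : X → Y` is a continuous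
surjective monotone map, then `Sln(Y) ≤ Sln(X)`. -/
theorem stmt_2 {X Y : Type u} [TopologicalSpace X] [CompactSpace X] [T2Space X]
    [TopologicalSpace Y] [CompactSpace Y] [T2Space Y]
    (f : X → Y) (hf : Continuous f) (hsurj : Function.Surjective f)
    (hmono : ∀ y : Y, IsConnected (f ⁻¹' {y})) :
    Sln Y ≤ Sln X := by
  classical
  refine le_csInf ?_ ?_
  · -- the set of continua containing `X` is nonempty: embed `X` into a Tychonoff cube
    haveI : ConnectedSpace ↥unitInterval := Subtype.connectedSpace
      ⟨⟨0, unitInterval.zero_mem⟩, isPreconnected_Icc⟩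
    set E : X → (C(X, ℝ) → ↥unitInterval) := fun x g =>
      ⟨max 0 (min 1 (g x)), le_max_left _ _, max_le zero_le_one (min_le_left _ _)⟩ with hE
    have hEcont : Continuous E := continuous_pi fun g =>
      Continuous.subtype_mk (continuous_const.max (continuous_const.min g.continuous)) _
    have hEinj : Function.Injective E := by
      intro x y hxy
      by_contra hne
      obtain ⟨g, hg0, hg1, -⟩ := exists_continuous_zero_one_of_isClosed
        (isClosed_singleton (x := x)) (isClosed_singleton (x := y))
        (disjoint_singleton.mpr hne)
      have h1 := congrArg (fun F => (F g : ℝ)) hxy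
      simp only [hE] at h1
      rw [hg0 (mem_singleton x), hg1 (mem_singleton y)] at h1
      norm_num at h1
    exact ⟨SlnC (C(X, ℝ) → ↥unitInterval), C(X, ℝ) → ↥unitInterval, inferInstance,
      inferInstance, inferInstance, inferInstance,
      ⟨E, (hEcont.isClosedEmbedding hEinj).isEmbedding⟩, rfl⟩
  · -- main bound: quotient any continuum containing `X` by the fibers of `f`
    rintro κ ⟨Z, tZ, hZc, hZ2, hZconn, ⟨e, he⟩, rfl⟩
    haveI := hZc; haveI := hZ2; haveI := hZconn
    letI s : Setoid Z :=
      ⟨fun z w => z = w ∨ ∃ x x' : X, e x = z ∧ e x' = w ∧ f x = f x', by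
        constructor
        · exact fun z => Or.inl rfl
        · rintro z w (rfl | ⟨x, x', h1, h2, h3⟩)
          · exact Or.inl rfl
          · exact Or.inr ⟨x', x, h2, h1, h3.symm⟩
        · rintro z w v (rfl | ⟨x, x', h1, h2, h3⟩) h'
          · exact h'
          · rcases h' with rfl | ⟨a, a', g1, g2, g3⟩
            · exact Or.inr ⟨x, x', h1, h2, h3⟩
            · refine Or.inr ⟨x, a', h1, g2, ?_⟩
              rw [h3, ← g3]
              congr 1
              exact he.injective (by rw [h2, g1])⟩
    set q : Z → Quotient s := Quotient.mk' with hq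
    have hqcont : Continuous q := continuous_quotient_mk'
    have hqsurj : Function.Surjective q := Quotient.mk''_surjective
    -- `q` is a closed map
    have hqclosed : IsClosedMap q := by
      intro A hA
      rw [← isQuotientMap_quotient_mk'.isClosed_preimage]
      have hsat : q ⁻¹' (q '' A) = A ∪ e '' (f ⁻¹' (f '' (e ⁻¹' A))) := by
        ext z
        constructor
        · rintro ⟨a, haA, ha⟩
          rcases Quotient.exact' ha with rfl | ⟨x, x', h1, h2, h3⟩
          · exact Or.inl haA
          · exact Or.inr ⟨x', ⟨x, show e x ∈ A from h1 ▸ haA, h3⟩, h2⟩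
        · rintro (hz | ⟨x', hx', rfl⟩)
          · exact ⟨z, hz, rfl⟩
          · obtain ⟨x, hxA, hfx⟩ := hx'
            exact ⟨e x, hxA, Quotient.sound' (Or.inr ⟨x, x', rfl, rfl, hfx⟩)⟩
      rw [hsat]
      exact hA.union
        ((((hA.preimage he.continuous).isCompact.image hf).isClosed.preimage
          hf).isCompact.image he.continuous).isClosed
    -- fibers of `q` over `⟦z⟧` are closed
    have hfibcl : ∀ z : Z, IsClosed (q ⁻¹' {q z}) := by
      intro z
      have : ({q z} : Set (Quotient s)) = q '' {z} := by simp
      rw [this]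
      exact (hqclosed _ isClosed_singleton).preimage hqcont
    -- the quotient is Hausdorff
    haveI hT2Q : T2Space (Quotient s) := by
      constructor
      intro a b hab
      obtain ⟨z, rfl⟩ := hqsurj a
      obtain ⟨w, rfl⟩ := hqsurj b
      have hdisj : Disjoint (q ⁻¹' {q z}) (q ⁻¹' {q w}) := by
        rw [Set.disjoint_left]
        rintro u hu1 hu2
        simp only [mem_preimage, mem_singleton_iff] at hu1 hu2
        exact hab (hu1 ▸ hu2 ▸ rfl)
      obtain ⟨U, V, hU, hV, hC1U, hC2V, hUV⟩ :=
        normal_separation (hfibcl z) (hfibcl w) hdisj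
      refine ⟨(q '' Uᶜ)ᶜ, (q '' Vᶜ)ᶜ, isOpen_compl_iff.mpr (hqclosed _ hU.isClosed_compl),
        isOpen_compl_iff.mpr (hqclosed _ hV.isClosed_compl), ?_, ?_, ?_⟩
      · rintro ⟨u, hu, hu2⟩
        exact hu (hC1U (by simp [hu2]))
      · rintro ⟨u, hu, hu2⟩
        exact hu (hC2V (by simp [hu2]))
      · rw [Set.disjoint_left]
        rintro c hc1 hc2
        obtain ⟨u, rfl⟩ := hqsurj c
        have huU : u ∈ U := by
          by_contra h
          exact hc1 ⟨u, h, rfl⟩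
        have huV : u ∈ V := by
          by_contra h
          exact hc2 ⟨u, h, rfl⟩
        exact Set.disjoint_left.mp hUV huU huV
    -- the quotient is a continuum
    haveI hconnQ : ConnectedSpace (Quotient s) := by
      have hpre : IsPreconnected (univ : Set (Quotient s)) := by
        have : IsPreconnected (q '' univ) :=
          isPreconnected_univ.image q hqcont.continuousOn
        rwa [image_univ, hqsurj.range_eq] at this
      obtain ⟨z⟩ := hZconn.toNonempty
      exact { isPreconnected_univ := hpre, toNonempty := ⟨q z⟩ }
    -- fibers of `q` are connected
    have hqmono : ∀ c : Quotient s, IsConnected (q ⁻¹' {c}) := by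
      intro c
      obtain ⟨z, rfl⟩ := hqsurj c
      by_cases hz : z ∈ Set.range e
      · obtain ⟨x, rfl⟩ := hz
        have hfib : q ⁻¹' {q (e x)} = e '' (f ⁻¹' {f x}) := by
          ext w
          constructor
          · intro hw
            rcases Quotient.exact' hw with rfl | ⟨a, a', h1, h2, h3⟩
            · exact ⟨x, rfl, rfl⟩
            · have : a' = x := he.injective h2
              subst this
              exact ⟨a, by simpa using h3, h1⟩
          · rintro ⟨a, ha, rfl⟩
            simp only [mem_preimage, mem_singleton_iff] at ha ⊢
            exact Quotient.sound' (Or.inr ⟨a, x, rfl, rfl, ha⟩)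
        rw [hfib]
        exact (hmono (f x)).image e he.continuous.continuousOn
      · have hfib : q ⁻¹' {q z} = {z} := by
          ext w
          constructor
          · intro hw
            rcases Quotient.exact' hw with rfl | ⟨a, a', h1, h2, h3⟩
            · exact rfl
            · exact absurd ⟨a', h2⟩ hz
          · rintro rfl
            exact rfl
        rw [hfib]
        exact isConnected_singleton
    -- `Y` embeds into the quotient
    have key : SlnC (Quotient s) ≤ SlnC Z := slnC_le_of_monotone hqcont hqsurj hqmono
    set e' : Y → Quotient s := fun y => q (e (hsurj y).choose) with he'
    have hcomp : e' ∘ f = q ∘ e := by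
      funext x
      exact Quotient.sound' (Or.inr ⟨(hsurj (f x)).choose, x, rfl, rfl,
        (hsurj (f x)).choose_spec⟩)
    have hfq : IsQuotientMap f := hf.isClosedMap.isQuotientMap hf hsurj
    have he'cont : Continuous e' := by
      rw [hfq.continuous_iff, hcomp]
      exact hqcont.comp he.continuous
    have he'inj : Function.Injective e' := by
      intro y1 y2 h
      rcases Quotient.exact' h with heq | ⟨x, x', h1, h2, h3⟩
      · have : (hsurj y1).choose = (hsurj y2).choose := he.injective heq
        rw [← (hsurj y1).choose_spec, ← (hsurj y2).choose_spec, this]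
      · have hx1 : x = (hsurj y1).choose := he.injective h1
        have hx2 : x' = (hsurj y2).choose := he.injective h2
        rw [← (hsurj y1).choose_spec, ← (hsurj y2).choose_spec, ← hx1, ← hx2, h3]
    have hmem : SlnC (Quotient s) ∈ {κ : Cardinal.{u} |
        ∃ (W : Type u) (_ : TopologicalSpace W), CompactSpace W ∧ T2Space W ∧
          ConnectedSpace W ∧ (∃ e : Y → W, IsEmbedding e) ∧ SlnC W = κ} :=
      ⟨Quotient s, inferInstance, inferInstance, inferInstance, inferInstance,
        ⟨e', (he'cont.isClosedEmbedding he'inj).isEmbedding⟩, rfl⟩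
    exact le_trans (csInf_le (OrderBot.bddBelow _) hmem) key
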